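/- For every n ≥ 1 there exists a bijection χ from the set of 321-avoiding permutations of [n] onto the set of 132-avoiding permutations of [n] such that for all 321-avoiding permutations p, q: Exc(p) ⊆ Exc(q) if and only if Des(χ(p)) ⊆ Des(χ(q)). (That is, the poset Q^A_n of 321-avoiding permutations of [n] ordered by containment of excedence sets is isomorphic to the poset P^A_n of 132-avoiding permutations of [n] ordered by containment of descent sets.) -/

import Mathlib

/-- A permutation `p` of `[n]` (0-based `Fin n`) is 321-avoiding if there are
no positions `a < b < c` with `p a > p b > p c`. -/
def Avoids321 {n : ℕ} (p : Equiv.Perm (Fin n)) : Prop :=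
  ∀ a b c : Fin n, a < b → b < c → ¬ (p b < p a ∧ p c < p b)

/-- A permutation `p` of `[n]` (0-based `Fin n`) is 132-avoiding if there are
no positions `a < b < c` with `p a < p c < p b`. -/
def Avoids132 {n : ℕ} (p : Equiv.Perm (Fin n)) : Prop :=
  ∀ a b c : Fin n, a < b → b < c → ¬ (p a < p c ∧ p c < p b)

/-- The descent set of `p`, as a set of 1-based positions `i ∈ [n-1]`:
`i` is a descent iff `p(i) > p(i+1)`, i.e. (0-based) `p ⟨i-1⟩ > p ⟨i⟩`. -/
def Des {n : ℕ} (p : Equiv.Perm (Fin n)) : Set ℕ :=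
  {i | ∃ h : 1 ≤ i ∧ i < n,
        p ⟨i, h.2⟩ < p ⟨i - 1, Nat.lt_of_le_of_lt (Nat.sub_le i 1) h.2⟩}

/-- The excedence set of `p`, as a set of 1-based positions `i ∈ [n]` with
`p(i) > i`, i.e. (0-based) `(p ⟨i-1⟩ : ℕ) > i - 1`. -/
def Exc {n : ℕ} (p : Equiv.Perm (Fin n)) : Set ℕ :=
  {i | ∃ h : 1 ≤ i ∧ i ≤ n,
        (i - 1 : ℕ) <
          (p ⟨i - 1, Nat.lt_of_lt_of_le (Nat.sub_lt h.1 Nat.one_pos) h.2⟩ : ℕ)}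

open Finset

variable {n : ℕ}

noncomputable section
open Classical

/-- Lehmer code: number of positions to the right with smaller value. -/
def codeFn (q : Equiv.Perm (Fin n)) (i : Fin n) : ℕ :=
  (univ.filter fun j => i < j ∧ q j < q i).card

def Anti (a : Fin n → ℕ) : Prop := ∀ i j : Fin n, i ≤ j → a j ≤ a i

def DropAt (a : Fin n → ℕ) (j : Fin n) : Prop :=
  ∃ h : (j : ℕ) + 1 < n, a ⟨(j : ℕ) + 1, h⟩ < a j

lemma codeFn_bound (q : Equiv.Perm (Fin n)) (i : Fin n) : codeFn q i + (i : ℕ) < n := by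
  have h1 : (univ.filter fun j => i < j ∧ q j < q i) ⊆ Ioi i := by
    intro j hj
    simp only [mem_filter] at hj
    simpa using hj.2.1
  have h2 := card_le_card h1
  rw [Fin.card_Ioi] at h2
  have := i.isLt
  unfold codeFn
  omega

lemma code_lt_code {q q' : Equiv.Perm (Fin n)} {i : Fin n}
    (hlt : q i < q' i) (hmin : ∀ j : Fin n, j < i → q j = q' j) :
    codeFn q i < codeFn q' i := by
  classical
  set A : Finset (Fin n) := univ.filter fun j => i < j ∧ q j < q i with hA
  set B : Finset (Fin n) := univ.filter fun j => i < j ∧ q' j < q' i with hB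
  set A' : Finset (Fin n) := A.image fun j => q'⁻¹ (q j) with hA'
  have hinj : Function.Injective fun j => q'⁻¹ (q j) :=
    (q'⁻¹.injective).comp q.injective
  have hcardA' : A'.card = A.card := card_image_of_injective _ hinj
  have hsub : A' ⊆ B := by
    intro x hx
    simp only [hA', mem_image] at hx
    obtain ⟨j, hj, hx⟩ := hx
    simp only [hA, mem_filter] at hj
    have hq'x : q' x = q j := by rw [← hx]; simp
    have hval : q' x < q' i := by rw [hq'x]; exact hj.2.2.trans hlt
    have hxi : i < x := by
      rcases lt_trichotomy x i with h | h | h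
      · exfalso
        have hqq := hmin x h
        rw [← hqq] at hq'x
        have := q.injective hq'x
        omega
      · exfalso; rw [h] at hval; exact lt_irrefl _ hval
      · exact h
    simp only [hB, mem_filter]
    exact ⟨mem_univ _, hxi, hval⟩
  set j0 : Fin n := q'⁻¹ (q i) with hj0
  have hq'j0 : q' j0 = q i := by simp [hj0]
  have hj0B : j0 ∈ B := by
    have hij0 : i < j0 := by
      rcases lt_trichotomy j0 i with h | h | h
      · exfalso
        have hqq := hmin j0 h
        rw [← hqq] at hq'j0
        have := q.injective hq'j0
        omega
      · exfalso; rw [h] at hq'j0; exact absurd hq'j0 (by omega)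
      · exact h
    simp only [hB, mem_filter]
    exact ⟨mem_univ _, hij0, by rw [hq'j0]; exact hlt⟩
  have hj0A' : j0 ∉ A' := by
    intro hx
    simp only [hA', mem_image] at hx
    obtain ⟨j, hj, hx⟩ := hx
    simp only [hA, mem_filter] at hj
    have : q j = q i := by
      have := congrArg q' hx
      simpa [hq'j0] using this
    have := q.injective this
    have := hj.2.1
    omega
  have : A'.card < B.card := card_lt_card ⟨hsub, fun hBA => hj0A' (hBA hj0B)⟩
  unfold codeFn
  rw [← hA, ← hB]
  omega

lemma codeFn_injective : Function.Injective (codeFn (n := n)) := by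
  classical
  intro q q' h
  by_contra hne
  have : (univ.filter fun i : Fin n => q i ≠ q' i).Nonempty := by
    by_contra hemp
    apply hne
    apply Equiv.ext
    intro i
    by_contra hi
    exact hemp ⟨i, by simp [hi]⟩
  set i := this.choose with hi
  -- use min' instead
  have hne2 : (univ.filter fun i : Fin n => q i ≠ q' i).Nonempty := this
  set m := (univ.filter fun i : Fin n => q i ≠ q' i).min' hne2 with hm
  have hmem : q m ≠ q' m := by
    have := min'_mem (univ.filter fun i : Fin n => q i ≠ q' i) hne2
    simpa using this
  have hmin : ∀ j : Fin n, j < m → q j = q' j := by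
    intro j hj
    by_contra hjne
    have : m ≤ j := min'_le _ _ (by simp [hjne])
    omega
  rcases lt_or_gt_of_ne hmem with hlt | hgt
  · have := code_lt_code hlt hmin
    rw [h] at this; omega
  · have := code_lt_code hgt (fun j hj => (hmin j hj).symm)
    rw [h] at this; omega

/-- For any permutation: descent at gap (j, j+1) iff the code drops there. -/
lemma descent_iff_drop (q : Equiv.Perm (Fin n)) (j : Fin n) (h : (j : ℕ) + 1 < n) :
    q ⟨(j : ℕ) + 1, h⟩ < q j ↔ codeFn q ⟨(j : ℕ) + 1, h⟩ < codeFn q j := by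
  classical
  set j' : Fin n := ⟨(j : ℕ) + 1, h⟩ with hj'
  have hjj' : j < j' := by simp [hj', Fin.lt_def]
  have hne : q j' ≠ q j := fun he => by
    have := q.injective he
    simp [hj', Fin.ext_iff] at this
  set B : Finset (Fin n) := univ.filter fun k => j' < k ∧ q k < q j' with hB
  set Aj : Finset (Fin n) := univ.filter fun k => j < k ∧ q k < q j with hAj
  constructor
  · intro hdes
    have hsub : insert j' B ⊆ Aj := by
      intro k hk
      rcases mem_insert.mp hk with hk | hk
      · subst hk; simp only [hAj, mem_filter]; exact ⟨mem_univ _, hjj', hdes⟩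
      · simp only [hB, mem_filter] at hk
        simp only [hAj, mem_filter]
        exact ⟨mem_univ _, hjj'.trans hk.2.1, hk.2.2.trans hdes⟩
    have hj'B : j' ∉ B := by simp [hB]
    have := card_le_card hsub
    rw [card_insert_of_notMem hj'B] at this
    unfold codeFn
    rw [← hB, ← hAj]
    omega
  · intro hcode
    by_contra hnd
    have hasc : q j < q j' := lt_of_le_of_ne (not_lt.mp hnd) (Ne.symm hne)
    have hsub : Aj ⊆ B := by
      intro k hk
      simp only [hAj, mem_filter] at hk
      have hkj' : j' < k := by
        have h1 : (j : ℕ) < (k : ℕ) := hk.2.1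
        have h2 : k ≠ j' := by
          intro he; rw [he] at hk
          exact absurd (hk.2.2.trans hasc) (lt_irrefl _)
        rw [Fin.lt_def]
        simp only [hj']
        rcases Nat.lt_or_ge ((j : ℕ) + 1) (k : ℕ) with h3 | h3
        · exact h3
        · exfalso; apply h2; apply Fin.ext; simp [hj']; omega
      simp only [hB, mem_filter]
      exact ⟨mem_univ _, hkj', hk.2.2.trans hasc⟩
    have := card_le_card hsub
    unfold codeFn at hcode
    rw [← hB, ← hAj] at hcode
    omega

lemma anti_of_adjacent (a : Fin n → ℕ)
    (hadj : ∀ (j : ℕ) (h : j + 1 < n), a ⟨j + 1, h⟩ ≤ a ⟨j, by omega⟩) : Anti a := by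
  have key : ∀ d : ℕ, ∀ i j : Fin n, (j : ℕ) = (i : ℕ) + d → a j ≤ a i := by
    intro d
    induction d with
    | zero => intro i j hij; have : i = j := Fin.ext (by omega); rw [this]
    | succ d ih =>
      intro i j hij
      have hlt : (i : ℕ) + d + 1 < n := by have := j.isLt; omega
      have h1 := hadj ((i : ℕ) + d) hlt
      have hj : j = ⟨(i : ℕ) + d + 1, hlt⟩ :=
        Fin.ext (show (j : ℕ) = (i : ℕ) + d + 1 by omega)
      rw [hj]
      exact h1.trans (ih i ⟨(i : ℕ) + d, Nat.lt_of_succ_lt hlt⟩ rfl)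
  intro i j hij
  exact key ((j : ℕ) - (i : ℕ)) i j (by omega)

lemma avoids132_code_anti (q : Equiv.Perm (Fin n)) (h : Avoids132 q) : Anti (codeFn q) := by
  classical
  apply anti_of_adjacent
  intro j hjn
  set jf : Fin n := ⟨j, by omega⟩ with hjf
  set j' : Fin n := ⟨j + 1, hjn⟩ with hj'
  have hj'eq : j' = ⟨(jf : ℕ) + 1, by simpa [hjf] using hjn⟩ := Fin.ext rfl
  rcases lt_or_ge (q j') (q jf) with hdes | hasc
  · have := (descent_iff_drop q jf (by simpa [hjf] using hjn)).mp (by rw [← hj'eq] at *; exact hdes)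
    rw [← hj'eq] at this
    omega
  · -- ascent case: show codeFn q j' ≤ codeFn q jf using 132-avoidance
    have hne : q jf ≠ q j' := fun he => by
      have := q.injective he
      simp [hjf, hj', Fin.ext_iff] at this
    have hasc' : q jf < q j' := lt_of_le_of_ne hasc hne
    have hjj' : jf < j' := by simp [hjf, hj', Fin.lt_def]
    have hsub : (univ.filter fun k => j' < k ∧ q k < q j') ⊆
        (univ.filter fun k => jf < k ∧ q k < q jf) := by
      intro k hk
      simp only [mem_filter] at hk ⊢
      refine ⟨mem_univ _, hjj'.trans hk.2.1, ?_⟩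
      by_contra hge
      have hlt2 : q jf < q k := by
        rcases lt_or_ge (q jf) (q k) with h1 | h1
        · exact h1
        · exfalso; apply hge
          rcases lt_or_eq_of_le h1 with h2 | h2
          · exact h2
          · exfalso
            have := q.injective h2.symm
            have h3 := hjj'.trans hk.2.1
            rw [this] at h3; exact lt_irrefl _ h3
      exact h jf j' k hjj' hk.2.1 ⟨hlt2, hk.2.2⟩
    exact card_le_card hsub

lemma code_anti_avoids132 (q : Equiv.Perm (Fin n)) (h : Anti (codeFn q)) : Avoids132 q := by
  classical
  intro a b c hab hbc ⟨h1, h2⟩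
  set s : Finset (Fin n) := univ.filter (fun j => a < j ∧ j ≤ b ∧ q c < q j) with hs
  have hbs : b ∈ s := by simp [hs, hab, h2]
  have hsne : s.Nonempty := ⟨b, hbs⟩
  set i' := s.min' hsne with hi'
  have hi'mem : i' ∈ s := min'_mem s hsne
  have hi'p : a < i' ∧ i' ≤ b ∧ q c < q i' := by simpa [hs] using hi'mem
  have hai' : (a : ℕ) < (i' : ℕ) := hi'p.1
  have hi'b : (i' : ℕ) ≤ (b : ℕ) := hi'p.2.1
  have hbcv : (b : ℕ) < (c : ℕ) := hbc
  obtain ⟨i, hi⟩ : ∃ i : Fin n, (i : ℕ) + 1 = (i' : ℕ) :=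
    ⟨⟨(i' : ℕ) - 1, by have := i'.isLt; omega⟩, by simp; omega⟩
  have hic : i < c := by rw [Fin.lt_def]; omega
  have hqi : q i < q c := by
    rcases Nat.lt_or_ge ((a : ℕ)) ((i : ℕ)) with hai | hai
    · have hins : i ∉ s := by
        intro hmem
        have := min'_le s i hmem
        rw [← hi'] at this
        rw [Fin.le_def] at this
        omega
      have hnotc : ¬ (a < i ∧ i ≤ b ∧ q c < q i) := by
        intro hcon; exact hins (by simp [hs, hcon.1, hcon.2.1, hcon.2.2])
      have haii : a < i := by rw [Fin.lt_def]; exact hai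
      have hib : i ≤ b := by rw [Fin.le_def]; omega
      have hqle : ¬ q c < q i := fun hq => hnotc ⟨haii, hib, hq⟩
      have hqne : q i ≠ q c := fun he => by
        have := q.injective he
        rw [this] at hic; exact lt_irrefl _ hic
      exact lt_of_le_of_ne (not_lt.mp hqle) hqne
    · have hia : i = a := Fin.ext (by omega)
      rw [hia]; exact h1
  have hin : (i : ℕ) + 1 < n := by rw [hi]; exact i'.isLt
  have hi'2 : i' = ⟨(i : ℕ) + 1, hin⟩ := Fin.ext (by simp [hi])
  have hasc : q i < q i' := hqi.trans hi'p.2.2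
  have hanti : codeFn q i' ≤ codeFn q i := h i i' (by rw [Fin.le_def]; omega)
  set A : Finset (Fin n) := univ.filter fun k => i < k ∧ q k < q i with hA
  set B : Finset (Fin n) := univ.filter fun k => i' < k ∧ q k < q i' with hB
  have hsub : A ⊆ B := by
    intro k hk
    simp only [hA, mem_filter] at hk
    have hki' : i' < k := by
      have hne : k ≠ i' := fun he => by
        rw [he] at hk
        exact absurd (hk.2.2.trans hasc) (lt_irrefl _)
      have hkne : (k : ℕ) ≠ (i' : ℕ) := fun he => hne (Fin.ext he)
      have hik : (i : ℕ) < (k : ℕ) := hk.2.1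
      rw [Fin.lt_def]
      omega
    simp only [hB, mem_filter]
    exact ⟨mem_univ _, hki', hk.2.2.trans hasc⟩
  have hcards : B.card ≤ A.card := hanti
  have heq : A = B := eq_of_subset_of_card_le hsub hcards
  have hcB : c ∈ B := by
    simp only [hB, mem_filter]
    have hic' : i' < c := by rw [Fin.lt_def]; omega
    exact ⟨mem_univ _, hic', hi'p.2.2⟩
  rw [← heq] at hcB
  simp only [hA, mem_filter] at hcB
  exact absurd (hcB.2.2.trans hqi) (lt_irrefl _)

lemma card_Iic_fin (i : Fin n) : (Finset.Iic i).card = (i : ℕ) + 1 := Fin.card_Iic i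

/-- In a 321-avoiding permutation, excedance values are increasing. -/
lemma exc_mono {p : Equiv.Perm (Fin n)} (h321 : Avoids321 p) {e e' : Fin n}
    (hlt : e < e') (he : (e : ℕ) < p e) (he' : (e' : ℕ) < p e') : p e < p e' := by
  classical
  by_contra hge
  have hne : p e ≠ p e' := fun h => by
    have := p.injective h
    rw [this] at hlt; exact lt_irrefl _ hlt
  have hgt : p e' < p e := lt_of_le_of_ne (not_lt.mp hge) (fun h => hne h.symm)
  -- find k > e' with p k ≤ e'
  have hex : ∃ k : Fin n, e' < k ∧ (p k : ℕ) ≤ (e' : ℕ) := by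
    by_contra hno
    push_neg at hno
    -- p⁻¹ maps Iic e' into ((Iic e').erase e').erase e
    have hmap : ∀ v : Fin n, v ≤ e' → p⁻¹ v ∈ ((Finset.Iic e').erase e').erase e := by
      intro v hv
      have hpv : p (p⁻¹ v) = v := p.apply_symm_apply v
      have hle : p⁻¹ v ≤ e' := by
        by_contra hgt2
        have := hno (p⁻¹ v) (not_le.mp hgt2)
        rw [hpv] at this
        exact absurd hv (by rw [Fin.le_def] at hv ⊢; omega)
      have hnee : p⁻¹ v ≠ e := by
        intro hh
        rw [hh] at hpv
        have : (p e : ℕ) ≤ (e' : ℕ) := by rw [hpv]; exact hv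
        have h2 : (e' : ℕ) < (p e' : ℕ) := he'
        omega
      have hnee' : p⁻¹ v ≠ e' := by
        intro hh
        rw [hh] at hpv
        have : (p e' : ℕ) ≤ (e' : ℕ) := by rw [hpv]; exact hv
        omega
      exact mem_erase.mpr ⟨hnee, mem_erase.mpr ⟨hnee', mem_Iic.mpr hle⟩⟩
    have hcard := card_le_card_of_injOn (fun v => p⁻¹ v)
      (fun v hv => hmap v (mem_Iic.mp hv))
      (fun x _ y _ h => p⁻¹.injective h)
    rw [card_Iic_fin] at hcard
    have hm1 : e ∈ (Finset.Iic e').erase e' :=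
      mem_erase.mpr ⟨ne_of_lt hlt, mem_Iic.mpr hlt.le⟩
    have hm2 : e' ∈ Finset.Iic e' := mem_Iic.mpr le_rfl
    have h1 : (((Finset.Iic e').erase e').erase e).card = (e' : ℕ) + 1 - 2 := by
      rw [card_erase_of_mem hm1, card_erase_of_mem hm2, card_Iic_fin]
      omega
    rw [h1] at hcard
    omega
  obtain ⟨k, hk1, hk2⟩ := hex
  have hpk : p k < p e' := by
    rw [Fin.lt_def]
    have := he'
    omega
  exact h321 e e' k hlt hk1 ⟨hgt, hpk⟩

/-- In a 321-avoiding permutation, non-excedance values are increasing. -/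
lemma def_mono {p : Equiv.Perm (Fin n)} (h321 : Avoids321 p) {d d' : Fin n}
    (hlt : d < d') (hd : (p d : ℕ) ≤ (d : ℕ)) (hd' : (p d' : ℕ) ≤ (d' : ℕ)) : p d < p d' := by
  classical
  by_contra hge
  have hne : p d ≠ p d' := fun h => by
    have := p.injective h
    rw [this] at hlt; exact lt_irrefl _ hlt
  have hgt : p d' < p d := lt_of_le_of_ne (not_lt.mp hge) (Ne.symm hne)
  have hex : ∃ h : Fin n, h < d ∧ p d < p h := by
    by_contra hno
    push_neg at hno
    -- p maps insert d' (Iic d) into Iic (p d)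
    have hmap : ∀ j : Fin n, j ∈ insert d' (Finset.Iic d) → p j ∈ Finset.Iic (p d) := by
      intro j hj
      rcases mem_insert.mp hj with hj | hj
      · subst hj; exact mem_Iic.mpr hgt.le
      · rw [mem_Iic] at hj
        rcases eq_or_lt_of_le hj with hj2 | hj2
        · have : j = d := hj2
          rw [this]; exact mem_Iic.mpr le_rfl
        · exact mem_Iic.mpr (hno j hj2)
    have hcard := card_le_card_of_injOn (fun j => p j) hmap
      (fun x _ y _ h => p.injective h)
    have h1 : (insert d' (Finset.Iic d)).card = (d : ℕ) + 2 := by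
      rw [card_insert_of_notMem, card_Iic_fin]
      intro hmem
      rw [mem_Iic] at hmem
      rw [Fin.le_def] at hmem
      rw [Fin.lt_def] at hlt
      omega
    rw [h1, card_Iic_fin] at hcard
    have := hlt
    rw [Fin.lt_def] at this
    omega
  obtain ⟨k, hk1, hk2⟩ := hex
  exact h321 k d d' hk1 hlt ⟨hk2, hgt⟩

def eminSet (p : Equiv.Perm (Fin n)) (i : Fin n) : Finset (Fin n) :=
  univ.filter fun e => i ≤ e ∧ (e : ℕ) < p e

def aFn (p : Equiv.Perm (Fin n)) (i : Fin n) : ℕ :=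
  if h : (eminSet p i).Nonempty then n - p ((eminSet p i).min' h) else 0

lemma eminSet_mono (p : Equiv.Perm (Fin n)) {i i' : Fin n} (h : i ≤ i') :
    eminSet p i' ⊆ eminSet p i := by
  intro e he
  simp only [eminSet, mem_filter] at he ⊢
  exact ⟨mem_univ _, h.trans he.2.1, he.2.2⟩

lemma aFn_bound (p : Equiv.Perm (Fin n)) (i : Fin n) : aFn p i + (i : ℕ) < n := by
  unfold aFn
  split_ifs with h
  · set e := (eminSet p i).min' h with he
    have hmem : e ∈ eminSet p i := min'_mem _ h
    simp only [eminSet, mem_filter] at hmem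
    have h1 : (i : ℕ) ≤ (e : ℕ) := hmem.2.1
    have h2 : (e : ℕ) < (p e : ℕ) := hmem.2.2
    have h3 : (p e : ℕ) < n := (p e).isLt
    omega
  · simpa using i.isLt

lemma aFn_anti {p : Equiv.Perm (Fin n)} (h321 : Avoids321 p) : Anti (aFn p) := by
  apply anti_of_adjacent
  intro j hjn
  set j0 : Fin n := ⟨j, by omega⟩ with hj0
  set j1 : Fin n := ⟨j + 1, hjn⟩ with hj1
  show aFn p j1 ≤ aFn p j0
  unfold aFn
  split_ifs with h1 h0 h0
  · -- both nonempty
    have hsub : eminSet p j1 ⊆ eminSet p j0 := eminSet_mono p (by rw [Fin.le_def]; simp [hj0, hj1])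
    set e1 := (eminSet p j1).min' h1
    set e0 := (eminSet p j0).min' h0
    have he1 : e1 ∈ eminSet p j0 := hsub (min'_mem _ h1)
    have he0le : e0 ≤ e1 := min'_le _ _ he1
    have hm0 : e0 ∈ eminSet p j0 := min'_mem _ h0
    have hm1 : e1 ∈ eminSet p j1 := min'_mem _ h1
    simp only [eminSet, mem_filter] at hm0 hm1
    rcases eq_or_lt_of_le he0le with heq | hlt
    · rw [heq]
    · have := exc_mono h321 hlt hm0.2.2 hm1.2.2
      have h2 : (p e0 : ℕ) < (p e1 : ℕ) := this
      omega
  · -- j1 nonempty but j0 empty: impossible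
    exfalso
    exact h0 (h1.mono (eminSet_mono p (by rw [Fin.le_def]; simp [hj0, hj1])))
  · exact Nat.zero_le _
  · exact Nat.zero_le _

lemma aFn_exc (p : Equiv.Perm (Fin n)) (j : Fin n) (hexc : (j : ℕ) < p j) :
    aFn p j = n - p j := by
  have hj : j ∈ eminSet p j := by
    simp only [eminSet, mem_filter, mem_univ, true_and]
    exact ⟨le_refl j, hexc⟩
  have hne : (eminSet p j).Nonempty := ⟨j, hj⟩
  have hmin : (eminSet p j).min' hne = j := by
    apply le_antisymm (min'_le _ _ hj)
    apply le_min'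
    intro y hy
    simp only [eminSet, mem_filter] at hy
    exact hy.2.1
  unfold aFn
  rw [dif_pos hne, hmin]

lemma aFn_drop_iff {p : Equiv.Perm (Fin n)} (h321 : Avoids321 p) (j : Fin n)
    (h : (j : ℕ) + 1 < n) :
    (j : ℕ) < p j ↔ aFn p ⟨(j : ℕ) + 1, h⟩ < aFn p j := by
  set j1 : Fin n := ⟨(j : ℕ) + 1, h⟩ with hj1
  constructor
  · intro hexc
    rw [aFn_exc p j hexc]
    have hpj : (p j : ℕ) < n := (p j).isLt
    unfold aFn
    split_ifs with h1
    · set e1 := (eminSet p j1).min' h1 with he1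
      have hm1 : e1 ∈ eminSet p j1 := min'_mem _ h1
      simp only [eminSet, mem_filter] at hm1
      have hje1 : j < e1 := by
        rw [Fin.lt_def]
        have := hm1.2.1
        rw [Fin.le_def] at this
        simp [hj1] at this
        omega
      have := exc_mono h321 hje1 hexc hm1.2.2
      have h2 : (p j : ℕ) < (p e1 : ℕ) := this
      have h3 : (p e1 : ℕ) < n := (p e1).isLt
      omega
    · omega
  · intro hdrop
    by_contra hnex
    have heq : eminSet p j = eminSet p j1 := by
      apply subset_antisymm
      · intro e he
        simp only [eminSet, mem_filter] at he ⊢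
        refine ⟨mem_univ _, ?_, he.2.2⟩
        have h1 : j ≤ e := he.2.1
        have h2 : e ≠ j := by
          intro hh
          rw [hh] at he
          exact hnex he.2.2
        rw [Fin.le_def] at h1 ⊢
        simp [hj1]
        have : (e : ℕ) ≠ (j : ℕ) := fun hh => h2 (Fin.ext hh)
        omega
      · exact eminSet_mono p (by rw [Fin.le_def]; simp [hj1])
    unfold aFn at hdrop
    rw [heq] at hdrop
    split_ifs at hdrop
    · omega
    · omega

section FillUnique

/-- Two injective maps, strictly increasing on a class `P`, with the same set of
values on `P`, agree on `P`. -/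
lemma fill_unique (f g : Fin n → Fin n) (hfinj : Function.Injective f)
    (hginj : Function.Injective g) (P : Fin n → Prop)
    (hfm : ∀ i j, P i → P j → i < j → f i < f j)
    (hgm : ∀ i j, P i → P j → i < j → g i < g j)
    (hr1 : ∀ i, P i → ∃ j, P j ∧ g j = f i)
    (hr2 : ∀ i, P i → ∃ j, P j ∧ f j = g i) :
    ∀ i, P i → f i = g i := by
  classical
  by_contra hcon
  push_neg at hcon
  obtain ⟨i0, hP0, hne0⟩ := hcon
  set s : Finset (Fin n) := univ.filter fun i => P i ∧ f i ≠ g i with hs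
  have hne : s.Nonempty := ⟨i0, by simp [hs, hP0, hne0]⟩
  set m := s.min' hne with hm
  have hmmem : m ∈ s := min'_mem _ hne
  have hPm : P m ∧ f m ≠ g m := by simpa [hs] using hmmem
  have hmin : ∀ j, P j → j < m → f j = g j := by
    intro j hPj hjm
    by_contra hne2
    have : m ≤ j := min'_le _ _ (by simp [hs, hPj, hne2])
    exact absurd hjm (not_lt.mpr this)
  have key : ∀ (f g : Fin n → Fin n), Function.Injective f → Function.Injective g →
      (∀ i j, P i → P j → i < j → f i < f j) → (∀ i j, P i → P j → i < j → g i < g j) →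
      (∀ i, P i → ∃ j, P j ∧ g j = f i) →
      (∀ j, P j → j < m → f j = g j) → f m < g m → P m → False := by
    intro f g hfinj hginj hfm hgm hr1 hmin hlt hPm
    obtain ⟨j, hPj, hgj⟩ := hr1 m hPm
    rcases lt_trichotomy j m with hj | hj | hj
    · have hfj := hmin j hPj hj
      have hfe : f j = f m := hfj.trans hgj
      exact absurd (hfinj hfe) (ne_of_lt hj)
    · rw [hj] at hgj
      exact absurd hgj (by intro hh; exact absurd hh.symm (ne_of_lt hlt))
    · have := hgm m j hPm hPj hj
      rw [hgj] at this
      exact absurd (hlt.trans this) (lt_irrefl _)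
  rcases lt_or_gt_of_ne hPm.2 with hlt | hgt
  · exact key f g hfinj hginj hfm hgm hr1 hmin hlt hPm.1
  · exact key g f hginj hfinj hgm hfm hr2 (fun j hPj hjm => (hmin j hPj hjm).symm) hgt hPm.1

end FillUnique

lemma aFn_inj {p p' : Equiv.Perm (Fin n)} (h321 : Avoids321 p) (h321' : Avoids321 p')
    (heq : aFn p = aFn p') : p = p' := by
  classical
  -- same excedance sets
  have hexcset : ∀ j : Fin n, ((j : ℕ) < p j ↔ (j : ℕ) < p' j) := by
    intro j
    rcases Nat.lt_or_ge ((j : ℕ) + 1) n with hj | hj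
    · rw [aFn_drop_iff h321 j hj, aFn_drop_iff h321' j hj, heq]
    · have h1 : (p j : ℕ) < n := (p j).isLt
      have h2 : (p' j : ℕ) < n := (p' j).isLt
      have h3 : (j : ℕ) < n := j.isLt
      constructor <;> intro <;> omega
  -- same values at excedances
  have hvals : ∀ j : Fin n, (j : ℕ) < p j → p j = p' j := by
    intro j hexc
    have hexc' : (j : ℕ) < p' j := (hexcset j).mp hexc
    have e1 := aFn_exc p j hexc
    have e2 := aFn_exc p' j hexc'
    rw [heq] at e1
    apply Fin.ext
    have h1 : (p j : ℕ) < n := (p j).isLt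
    have h2 : (p' j : ℕ) < n := (p' j).isLt
    omega
  -- non-excedance values agree via fill_unique
  set P : Fin n → Prop := fun j => (p j : ℕ) ≤ (j : ℕ) with hP
  have hfill := fill_unique p p' p.injective p'.injective P
    (fun i j hPi hPj hij => def_mono h321 hij hPi hPj)
    (fun i j hPi hPj hij => by
      apply def_mono h321' hij
      · have := (hexcset i); simp only [hP] at hPi ⊢; omega
      · have := (hexcset j); simp only [hP] at hPj ⊢; omega)
    (fun i hPi => by
      refine ⟨p'⁻¹ (p i), ?_, p'.apply_symm_apply _⟩
      by_contra hnp
      simp only [hP, not_le] at hnp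
      set j := p'⁻¹ (p i) with hj
      have hpj : p' j = p i := p'.apply_symm_apply _
      have hexcj : (j : ℕ) < p j := hnp
      have : p j = p i := (hvals j hexcj).trans hpj
      have hji : j = i := p.injective this
      rw [hji] at hexcj
      simp only [hP] at hPi
      omega)
    (fun i hPi => by
      refine ⟨p⁻¹ (p' i), ?_, p.apply_symm_apply _⟩
      by_contra hnp
      simp only [hP, not_le] at hnp
      set j := p⁻¹ (p' i) with hj
      have hpj : p j = p' i := p.apply_symm_apply _
      have hexcj : (j : ℕ) < p j := hnp
      have : p' j = p' i := ((hvals j hexcj).symm).trans hpj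
      have hji : j = i := p'.injective this
      rw [hji] at hexcj
      simp only [hP] at hPi
      have hexci' : (i : ℕ) < p' i := (hexcset i).mp hexcj
      omega)
  apply Equiv.ext
  intro i
  rcases Nat.lt_or_ge ((i : ℕ)) ((p i : ℕ)) with hexc | hnexc
  · exact hvals i hexc
  · exact hfill i hnexc

lemma iso_filter_card {s t : Finset (Fin n)} (φ : s ≃o t) (x : Fin n) (hx : x ∈ s) :
    (t.filter fun z => z ≤ (φ ⟨x, hx⟩ : Fin n)).card = (s.filter fun y => y ≤ x).card := by
  symm
  apply Finset.card_nbij' (i := fun y => if h : y ∈ s then (φ ⟨y, h⟩ : Fin n) else y)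
    (j := fun z => if h : z ∈ t then (φ.symm ⟨z, h⟩ : Fin n) else z)
  · intro y hy
    rw [mem_coe, mem_filter] at hy
    dsimp only
    rw [dif_pos hy.1, mem_coe, mem_filter]
    refine ⟨(φ ⟨y, hy.1⟩).2, ?_⟩
    exact Subtype.coe_le_coe.mpr (φ.monotone (Subtype.coe_le_coe.mp hy.2))
  · intro z hz
    rw [mem_coe, mem_filter] at hz
    dsimp only
    rw [dif_pos hz.1, mem_coe, mem_filter]
    refine ⟨(φ.symm ⟨z, hz.1⟩).2, ?_⟩
    have h2 : φ.symm ⟨z, hz.1⟩ ≤ φ.symm (φ ⟨x, hx⟩) :=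
      φ.symm.monotone (Subtype.coe_le_coe.mp hz.2)
    rw [φ.symm_apply_apply] at h2
    exact Subtype.coe_le_coe.mpr h2
  · intro y hy
    rw [mem_coe, mem_filter] at hy
    dsimp only
    rw [dif_pos hy.1]
    have hmem : (φ ⟨y, hy.1⟩ : Fin n) ∈ t := (φ ⟨y, hy.1⟩).2
    rw [dif_pos hmem, Subtype.coe_eta, φ.symm_apply_apply]
  · intro z hz
    rw [mem_coe, mem_filter] at hz
    dsimp only
    rw [dif_pos hz.1]
    have hmem : (φ.symm ⟨z, hz.1⟩ : Fin n) ∈ s := (φ.symm ⟨z, hz.1⟩).2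
    rw [dif_pos hmem, Subtype.coe_eta, φ.apply_symm_apply]

def dropSet (a : Fin n → ℕ) : Finset (Fin n) := univ.filter (DropAt a)

def vOf (a : Fin n → ℕ) (e : Fin n) : Fin n := ⟨n - 1 - (a e - 1), by have := e.isLt; omega⟩

lemma drop_pos (a : Fin n → ℕ) {e : Fin n} (he : e ∈ dropSet a) : 1 ≤ a e := by
  simp only [dropSet, mem_filter] at he
  obtain ⟨h, hlt⟩ := he.2
  omega

lemma vOf_val (a : Fin n → ℕ) (hb : ∀ i : Fin n, a i + (i : ℕ) < n) {e : Fin n}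
    (he : e ∈ dropSet a) : (vOf a e : ℕ) = n - a e := by
  have h1 := drop_pos a he
  have h2 := hb e
  simp only [vOf]
  omega

lemma vOf_gt (a : Fin n → ℕ) (hb : ∀ i : Fin n, a i + (i : ℕ) < n) {e : Fin n}
    (he : e ∈ dropSet a) : (e : ℕ) < vOf a e := by
  rw [vOf_val a hb he]
  have h1 := drop_pos a he
  have h2 := hb e
  omega

lemma a_strict (a : Fin n → ℕ) (hanti : Anti a) {e e' : Fin n}
    (he : e ∈ dropSet a) (hee : e < e') : a e' < a e := by
  simp only [dropSet, mem_filter] at he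
  obtain ⟨h, hlt⟩ := he.2
  have hle : (⟨(e : ℕ) + 1, h⟩ : Fin n) ≤ e' := by rw [Fin.le_def]; exact hee
  exact lt_of_le_of_lt (hanti _ _ hle) hlt

lemma vOf_strict (a : Fin n → ℕ) (hb : ∀ i : Fin n, a i + (i : ℕ) < n) (hanti : Anti a)
    {e e' : Fin n} (he : e ∈ dropSet a) (he' : e' ∈ dropSet a)
    (hee : e < e') : vOf a e < vOf a e' := by
  have h1 := a_strict a hanti he hee
  have h2 := drop_pos a he'
  have h3 := hb e
  have h4 := hb e'
  rw [Fin.lt_def]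
  simp only [vOf]
  omega

def valSet (a : Fin n → ℕ) : Finset (Fin n) := (dropSet a).image (vOf a)

lemma vOf_injOn (a : Fin n → ℕ) (hb : ∀ i : Fin n, a i + (i : ℕ) < n) (hanti : Anti a) :
    Set.InjOn (vOf a) (dropSet a) := by
  intro x hx y hy hxy
  rcases lt_trichotomy x y with h | h | h
  · exact absurd hxy (ne_of_lt (vOf_strict a hb hanti hx hy h))
  · exact h
  · exact absurd hxy.symm (ne_of_lt (vOf_strict a hb hanti hy hx h))

lemma card_compl_eq (a : Fin n → ℕ) (hb : ∀ i : Fin n, a i + (i : ℕ) < n) (hanti : Anti a) :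
    ((valSet a)ᶜ : Finset (Fin n)).card = ((dropSet a)ᶜ).card := by
  have h1 : (valSet a).card = (dropSet a).card := by
    rw [valSet]; exact card_image_of_injOn (vOf_injOn a hb hanti)
  rw [card_compl, card_compl, h1]

def isoEV (a : Fin n → ℕ) (hb : ∀ i : Fin n, a i + (i : ℕ) < n) (hanti : Anti a) :
    ((dropSet a)ᶜ : Finset (Fin n)) ≃o ((valSet a)ᶜ : Finset (Fin n)) :=
  (Finset.orderIsoOfFin _ rfl).symm.trans
    (Finset.orderIsoOfFin _ (card_compl_eq a hb hanti))

def fFn (a : Fin n → ℕ) (hb : ∀ i : Fin n, a i + (i : ℕ) < n) (hanti : Anti a)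
    (i : Fin n) : Fin n :=
  if h : i ∈ dropSet a then vOf a i
  else (isoEV a hb hanti ⟨i, mem_compl.mpr h⟩ : Fin n)

variable {a : Fin n → ℕ} {hb : ∀ i : Fin n, a i + (i : ℕ) < n} {hanti : Anti a}

lemma fFn_mem_val {i : Fin n} (h : i ∈ dropSet a) : fFn a hb hanti i ∈ valSet a := by
  rw [fFn, dif_pos h]
  exact mem_image_of_mem _ h

lemma fFn_mem_compl {i : Fin n} (h : i ∉ dropSet a) :
    fFn a hb hanti i ∈ ((valSet a)ᶜ : Finset (Fin n)) := by
  rw [fFn, dif_neg h]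
  exact (isoEV a hb hanti ⟨i, mem_compl.mpr h⟩).2

lemma fFn_mono_compl {i i' : Fin n} (h : i ∉ dropSet a) (h' : i' ∉ dropSet a)
    (hlt : i < i') : fFn a hb hanti i < fFn a hb hanti i' := by
  simp only [fFn]
  rw [dif_neg h, dif_neg h']
  exact Subtype.coe_lt_coe.mpr ((isoEV a hb hanti).strictMono (Subtype.mk_lt_mk.mpr hlt))

lemma fFn_mono_drop {i i' : Fin n} (h : i ∈ dropSet a) (h' : i' ∈ dropSet a)
    (hlt : i < i') : fFn a hb hanti i < fFn a hb hanti i' := by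
  simp only [fFn]
  rw [dif_pos h, dif_pos h']
  exact vOf_strict a hb hanti h h' hlt

lemma fFn_inj : Function.Injective (fFn a hb hanti) := by
  intro x y hxy
  by_contra hne
  rcases lt_trichotomy x y with h | h | h
  · by_cases hx : x ∈ dropSet a <;> by_cases hy : y ∈ dropSet a
    · exact absurd hxy (ne_of_lt (fFn_mono_drop hx hy h))
    · have h1 := fFn_mem_val (hb := hb) (hanti := hanti) hx
      have h2 := fFn_mem_compl (hb := hb) (hanti := hanti) hy
      rw [hxy] at h1
      exact absurd h1 (mem_compl.mp h2)
    · have h1 := fFn_mem_val (hb := hb) (hanti := hanti) hy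
      have h2 := fFn_mem_compl (hb := hb) (hanti := hanti) hx
      rw [← hxy] at h1
      exact absurd h1 (mem_compl.mp h2)
    · exact absurd hxy (ne_of_lt (fFn_mono_compl hx hy h))
  · exact hne h
  · by_cases hx : x ∈ dropSet a <;> by_cases hy : y ∈ dropSet a
    · exact absurd hxy.symm (ne_of_lt (fFn_mono_drop hy hx h))
    · have h1 := fFn_mem_val (hb := hb) (hanti := hanti) hx
      have h2 := fFn_mem_compl (hb := hb) (hanti := hanti) hy
      rw [hxy] at h1
      exact absurd h1 (mem_compl.mp h2)
    · have h1 := fFn_mem_val (hb := hb) (hanti := hanti) hy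
      have h2 := fFn_mem_compl (hb := hb) (hanti := hanti) hx
      rw [← hxy] at h1
      exact absurd h1 (mem_compl.mp h2)
    · exact absurd hxy.symm (ne_of_lt (fFn_mono_compl hy hx h))

def rPerm (a : Fin n → ℕ) (hb : ∀ i : Fin n, a i + (i : ℕ) < n) (hanti : Anti a) :
    Equiv.Perm (Fin n) :=
  Equiv.ofBijective (fFn a hb hanti)
    ((Finite.injective_iff_bijective).mp fFn_inj)

lemma rPerm_apply (i : Fin n) : rPerm a hb hanti i = fFn a hb hanti i := rfl

lemma rPerm_avoids : Avoids321 (rPerm a hb hanti) := by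
  intro x y z hxy hyz hcon
  obtain ⟨h1, h2⟩ := hcon
  rw [rPerm_apply, rPerm_apply] at h1 h2
  have key : ∀ u v : Fin n, u < v → fFn a hb hanti v < fFn a hb hanti u →
      ¬ (u ∈ dropSet a ↔ v ∈ dropSet a) := by
    intro u v huv hvu hiff
    by_cases hu : u ∈ dropSet a
    · exact absurd hvu (not_lt.mpr (fFn_mono_drop hu (hiff.mp hu) huv).le)
    · exact absurd hvu (not_lt.mpr
        (fFn_mono_compl hu (fun hv => hu (hiff.mpr hv)) huv).le)
  have k1 := key x y hxy h1
  have k2 := key y z hyz h2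
  have k3 := key x z (hxy.trans hyz) (h2.trans h1)
  tauto

lemma count_vals_le (a : Fin n → ℕ) (hb : ∀ i : Fin n, a i + (i : ℕ) < n) (i : Fin n) :
    ((valSet a).filter fun v => v ≤ i).card ≤ ((dropSet a).filter fun e => e ≤ i).card := by
  have hsub : (valSet a).filter (fun v => v ≤ i) ⊆
      ((dropSet a).filter fun e => e ≤ i).image (vOf a) := by
    intro v hv
    rw [mem_filter] at hv
    obtain ⟨e, he, hve⟩ := mem_image.mp hv.1
    apply mem_image.mpr
    refine ⟨e, mem_filter.mpr ⟨he, ?_⟩, hve⟩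
    have h1 : (e : ℕ) < (vOf a e : ℕ) := vOf_gt a hb he
    have h2 : (v : ℕ) ≤ (i : ℕ) := hv.2
    rw [Fin.le_def]
    rw [← hve] at h2
    omega
  calc ((valSet a).filter fun v => v ≤ i).card
      ≤ (((dropSet a).filter fun e => e ≤ i).image (vOf a)).card := card_le_card hsub
    _ ≤ ((dropSet a).filter fun e => e ≤ i).card := card_image_le

lemma count_compl_ge (a : Fin n → ℕ) (hb : ∀ i : Fin n, a i + (i : ℕ) < n) (i : Fin n) :
    (((dropSet a)ᶜ : Finset (Fin n)).filter fun x => x ≤ i).card ≤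
      (((valSet a)ᶜ : Finset (Fin n)).filter fun x => x ≤ i).card := by
  have key : ∀ s : Finset (Fin n), ((sᶜ : Finset (Fin n)).filter fun x => x ≤ i).card
      = ((i : ℕ) + 1) - (s.filter fun x => x ≤ i).card := by
    intro s
    have h1 : (sᶜ.filter fun x => x ≤ i) = (Finset.Iic i) \ (s.filter fun x => x ≤ i) := by
      ext x
      simp only [mem_filter, mem_compl, mem_sdiff, mem_Iic]
      tauto
    have h2 : (s.filter fun x => x ≤ i) ⊆ Finset.Iic i := by
      intro x hx; rw [mem_filter] at hx; exact mem_Iic.mpr hx.2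
    rw [h1, card_sdiff_of_subset h2, Fin.card_Iic]
  rw [key, key]
  have h3 := count_vals_le a hb i
  have h4 : ((dropSet a).filter fun e => e ≤ i).card ≤ (i : ℕ) + 1 := by
    calc ((dropSet a).filter fun e => e ≤ i).card ≤ (Finset.Iic i).card := by
          apply card_le_card
          intro x hx; rw [mem_filter] at hx; exact mem_Iic.mpr hx.2
      _ = (i : ℕ) + 1 := Fin.card_Iic i
  omega

lemma rPerm_exc_iff (i : Fin n) : ((i : ℕ) < rPerm a hb hanti i) ↔ i ∈ dropSet a := by
  rw [rPerm_apply]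
  constructor
  · intro hlt
    by_contra hni
    set w : Fin n := fFn a hb hanti i with hw
    have hwc : w ∈ ((valSet a)ᶜ : Finset (Fin n)) := fFn_mem_compl hni
    have hwdef : w = ((isoEV a hb hanti) ⟨i, mem_compl.mpr hni⟩ : Fin n) := by
      rw [hw, fFn, dif_neg hni]
    have hcard : (((valSet a)ᶜ : Finset (Fin n)).filter fun z => z ≤ w).card
        = (((dropSet a)ᶜ : Finset (Fin n)).filter fun y => y ≤ i).card := by
      rw [hwdef]
      exact iso_filter_card (isoEV a hb hanti) i (mem_compl.mpr hni)
    have hins : insert w (((valSet a)ᶜ : Finset (Fin n)).filter fun x => x ≤ i) ⊆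
        ((valSet a)ᶜ : Finset (Fin n)).filter fun z => z ≤ w := by
      intro x hx
      rcases mem_insert.mp hx with hx | hx
      · subst hx; exact mem_filter.mpr ⟨hwc, le_refl _⟩
      · rw [mem_filter] at hx ⊢
        refine ⟨hx.1, ?_⟩
        have hxi : (x : ℕ) ≤ (i : ℕ) := hx.2
        have hiw : (i : ℕ) < (w : ℕ) := hlt
        rw [Fin.le_def]
        omega
    have hwni : w ∉ (((valSet a)ᶜ : Finset (Fin n)).filter fun x => x ≤ i) := by
      rw [mem_filter]
      intro hcon
      have hc1 : (w : ℕ) ≤ (i : ℕ) := hcon.2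
      have hc2 : (i : ℕ) < (w : ℕ) := hlt
      omega
    have hle := card_le_card hins
    rw [card_insert_of_notMem hwni, hcard] at hle
    have := count_compl_ge a hb i
    omega
  · intro hi
    rw [fFn, dif_pos hi]
    exact vOf_gt a hb hi

lemma anti_const (a : Fin n → ℕ) (hanti : Anti a) {i e : Fin n} (hie : i ≤ e)
    (hnd : ∀ j : Fin n, i ≤ j → j < e → ¬ DropAt a j) : a i = a e := by
  refine le_antisymm ?_ (hanti i e hie)
  have key : ∀ d : ℕ, ∀ i e : Fin n, (e : ℕ) = (i : ℕ) + d →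
      (∀ j : Fin n, i ≤ j → j < e → ¬ DropAt a j) → a i ≤ a e := by
    intro d
    induction d with
    | zero => intro i e he _; have : i = e := Fin.ext (by omega); rw [this]
    | succ d ih =>
      intro i e he hnd
      have hlt : (i : ℕ) + d < n := by have := e.isLt; omega
      set em : Fin n := ⟨(i : ℕ) + d, hlt⟩ with hem
      have h1 : a i ≤ a em := by
        apply ih i em (by simp [hem])
        intro j hij hjem
        apply hnd j hij
        rw [Fin.lt_def] at hjem ⊢
        simp [hem] at hjem
        omega
      have h2 : a em ≤ a e := by
        have hnd2 := hnd em (by rw [Fin.le_def]; simp [hem]) (by rw [Fin.lt_def]; simp [hem]; omega)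
        rw [DropAt] at hnd2
        push_neg at hnd2
        have h3 : (em : ℕ) + 1 < n := by have := e.isLt; simp [hem]; omega
        have h4 := hnd2 h3
        have h5 : (⟨(em : ℕ) + 1, h3⟩ : Fin n) = e := Fin.ext (by simp [hem]; omega)
        rw [h5] at h4
        exact h4
      exact h1.trans h2
  exact key ((e : ℕ) - (i : ℕ)) i e (by have := Fin.le_def.mp hie; omega) hnd

lemma eminSet_rPerm (a : Fin n → ℕ) (hb : ∀ i : Fin n, a i + (i : ℕ) < n) (hanti : Anti a)
    (i : Fin n) :
    eminSet (rPerm a hb hanti) i = (dropSet a).filter (fun e => i ≤ e) := by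
  ext e
  simp only [eminSet, mem_filter, mem_univ, true_and]
  rw [rPerm_exc_iff]
  tauto

lemma aFn_rPerm (a : Fin n → ℕ) (hb : ∀ i : Fin n, a i + (i : ℕ) < n) (hanti : Anti a) :
    aFn (rPerm a hb hanti) = a := by
  funext i
  rw [aFn]
  split_ifs with h
  · set e0 := (eminSet (rPerm a hb hanti) i).min' h with he0
    have hmem : e0 ∈ eminSet (rPerm a hb hanti) i := min'_mem _ h
    rw [eminSet_rPerm a hb hanti i, mem_filter] at hmem
    have hdrop : e0 ∈ dropSet a := hmem.1
    have hie0 : i ≤ e0 := hmem.2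
    have hval : (rPerm a hb hanti e0 : ℕ) = n - a e0 := by
      rw [rPerm_apply, fFn, dif_pos hdrop]
      exact vOf_val a hb hdrop
    rw [hval]
    have h1 := drop_pos a hdrop
    have h2 := hb e0
    have hconst : a i = a e0 := by
      apply anti_const a hanti hie0
      intro j hij hje0 hdropj
      have hjmem : j ∈ eminSet (rPerm a hb hanti) i := by
        rw [eminSet_rPerm a hb hanti i, mem_filter]
        exact ⟨by simp [dropSet, hdropj], hij⟩
      have := min'_le _ _ hjmem
      rw [← he0] at this
      exact absurd hje0 (not_lt.mpr this)
    omega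
  · -- empty: a i = 0
    have hne : ∀ e : Fin n, i ≤ e → e ∉ dropSet a := by
      intro e hie hdrop
      apply h
      refine ⟨e, ?_⟩
      rw [eminSet_rPerm a hb hanti i, mem_filter]
      exact ⟨hdrop, hie⟩
    have hn1 : n - 1 < n := by have := i.isLt; omega
    have hlast : a i = a ⟨n - 1, hn1⟩ := by
      apply anti_const a hanti
      · rw [Fin.le_def]; have := i.isLt; simp; omega
      · intro j hij _ hdropj
        exact hne j hij (by simp [dropSet, hdropj])
    have := hb ⟨n - 1, hn1⟩
    simp at this
    omega



def CodeT (n : ℕ) := {a : Fin n → ℕ // ∀ i : Fin n, a i + (i : ℕ) < n}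

def codeEquivPi : CodeT n ≃ (∀ i : Fin n, Fin (n - (i : ℕ))) where
  toFun a i := ⟨a.1 i, by have := a.2 i; omega⟩
  invFun f := ⟨fun i => (f i : ℕ), by
    intro i
    show (f i : ℕ) + (i : ℕ) < n
    have := (f i).isLt
    omega⟩
  left_inv a := rfl
  right_inv f := by funext i; apply Fin.ext; rfl

instance : Fintype (CodeT n) := Fintype.ofEquiv _ (codeEquivPi (n := n)).symm

lemma card_CodeT : Fintype.card (CodeT n) = Nat.factorial n := by
  rw [Fintype.card_congr (codeEquivPi (n := n)), Fintype.card_pi]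
  simp only [Fintype.card_fin]
  rw [Fin.prod_univ_eq_prod_range (fun i => n - i) n]
  have h1 : ∏ i ∈ Finset.range n, (n - i) = ∏ i ∈ Finset.range n, ((fun j => j + 1) (n - 1 - i)) := by
    apply Finset.prod_congr rfl
    intro i hi
    rw [Finset.mem_range] at hi
    simp only
    omega
  rw [h1, Finset.prod_range_reflect (fun j => j + 1) n]
  exact Finset.prod_range_add_one_eq_factorial n

def codeD : Equiv.Perm (Fin n) → CodeT n := fun q => ⟨codeFn q, codeFn_bound q⟩

lemma codeD_bij : Function.Bijective (codeD (n := n)) := by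
  rw [Fintype.bijective_iff_injective_and_card]
  constructor
  · intro q q' h
    exact codeFn_injective (congrArg Subtype.val h)
  · rw [card_CodeT, Fintype.card_perm, Fintype.card_fin]

def eB : Equiv.Perm (Fin n) ≃ CodeT n := Equiv.ofBijective _ codeD_bij

def eB' : {q : Equiv.Perm (Fin n) // Avoids132 q} ≃ {d : CodeT n // Anti d.1} :=
  (eB (n := n)).subtypeEquiv fun q =>
    ⟨fun h => avoids132_code_anti q h, fun h => code_anti_avoids132 q h⟩

def mA : {p : Equiv.Perm (Fin n) // Avoids321 p} → {d : CodeT n // Anti d.1} :=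
  fun p => ⟨⟨aFn p.1, aFn_bound p.1⟩, aFn_anti p.2⟩

lemma mA_bij : Function.Bijective (mA (n := n)) := by
  constructor
  · intro p p' h
    apply Subtype.ext
    apply aFn_inj p.2 p'.2
    exact congrArg (fun d => d.1.1) h
  · rintro ⟨⟨a, hb⟩, hanti⟩
    refine ⟨⟨rPerm a hb hanti, rPerm_avoids⟩, ?_⟩
    apply Subtype.ext
    apply Subtype.ext
    exact aFn_rPerm a hb hanti

def eA : {p : Equiv.Perm (Fin n) // Avoids321 p} ≃ {d : CodeT n // Anti d.1} :=
  Equiv.ofBijective _ mA_bij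

def chi : {p : Equiv.Perm (Fin n) // Avoids321 p} ≃ {q : Equiv.Perm (Fin n) // Avoids132 q} :=
  (eA (n := n)).trans (eB' (n := n)).symm

lemma chi_code (p : {p : Equiv.Perm (Fin n) // Avoids321 p}) :
    codeFn (chi p).1 = aFn p.1 := by
  have h1 : eB' (chi p) = mA p := by
    show eB' ((eB' (n := n)).symm (eA p)) = mA p
    rw [Equiv.apply_symm_apply]
    rfl
  exact congrArg (fun d => d.1.1) h1

lemma des_eq_exc (p q : Equiv.Perm (Fin n)) (hp : Avoids321 p)
    (hcode : codeFn q = aFn p) : Des q = Exc p := by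
  ext i
  simp only [Des, Exc, Set.mem_setOf_eq]
  constructor
  · rintro ⟨⟨h1, h2⟩, hdes⟩
    refine ⟨⟨h1, le_of_lt h2⟩, ?_⟩
    set j : Fin n := ⟨i - 1, by omega⟩ with hj
    have hjn : (j : ℕ) + 1 < n := by simp [hj]; omega
    have hj1 : (⟨(j : ℕ) + 1, hjn⟩ : Fin n) = ⟨i, h2⟩ := Fin.ext (by simp [hj]; omega)
    have hdrop := (descent_iff_drop q j hjn).mp (by rw [hj1]; exact hdes)
    rw [hcode] at hdrop
    exact (aFn_drop_iff hp j hjn).mpr hdrop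
  · rintro ⟨⟨h1, h2⟩, hexc⟩
    have h2' : i < n := by
      rcases Nat.lt_or_ge i n with h | h
      · exact h
      · exfalso
        have hin : i = n := by omega
        have := (p ⟨i - 1, by omega⟩).isLt
        omega
    refine ⟨⟨h1, h2'⟩, ?_⟩
    set j : Fin n := ⟨i - 1, by omega⟩ with hj
    have hjn : (j : ℕ) + 1 < n := by simp [hj]; omega
    have hj1 : (⟨(j : ℕ) + 1, hjn⟩ : Fin n) = ⟨i, h2'⟩ := Fin.ext (by simp [hj]; omega)
    have hdrop := (aFn_drop_iff hp j hjn).mp hexc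
    rw [← hcode] at hdrop
    have := (descent_iff_drop q j hjn).mpr hdrop
    rw [hj1] at this
    exact this

end

/-- The poset `Q^A_n` of 321-avoiding permutations of `[n]` ordered by
containment of excedence sets is isomorphic to the poset `P^A_n` of
132-avoiding permutations of `[n]` ordered by containment of descent sets. -/
theorem stmt10 (n : ℕ) (hn : 1 ≤ n) :
    ∃ χ : {p : Equiv.Perm (Fin n) // Avoids321 p} ≃
          {p : Equiv.Perm (Fin n) // Avoids132 p},
      ∀ p q : {p : Equiv.Perm (Fin n) // Avoids321 p},
        Exc p.1 ⊆ Exc q.1 ↔ Des (χ p).1 ⊆ Des (χ q).1 := by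
  refine ⟨chi, ?_⟩
  intro p q
  rw [des_eq_exc p.1 (chi p).1 p.2 (chi_code p),
      des_eq_exc q.1 (chi q).1 q.2 (chi_code q)]
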